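/- Let n be a 2-step nilpotent Lie algebra with inner product and let F : n → n be a skew-symmetric linear map with associated 2-form ω(X,Y) = ⟨F X, Y⟩. Then ω is closed (i.e. ⟨F U,[V,W]⟩ + ⟨F V,[W,U]⟩ + ⟨F W,[U,V]⟩ = 0 for all U,V,W ∈ n) if and only if (C1) the z-component of F(Z) lies in the orthogonal complement of [n,n] for every Z ∈ z, and (C2) ⟨F_z U,[V,W]⟩ + ⟨F_z V,[W,U]⟩ + ⟨F_z W,[U,V]⟩ = 0 for all U,V,W ∈ v, where F_z denotes the orthogonal projection of F onto z. -/

import Mathlib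

open RealInnerProductSpace

/-- For a skew-symmetric endomorphism `F` of a 2-step nilpotent
metric Lie algebra, the associated 2-form `ω(X,Y) = ⟪F X, Y⟫` is closed iff
(C1) the `z`-component of `F Z` is orthogonal to `[n,n]` for every `Z ∈ z`, and
(C2) the cyclic condition holds for the `z`-component of `F` on `v = zᗮ`. -/
theorem stmt_3 {n : Type*} [NormedAddCommGroup n] [InnerProductSpace ℝ n]
    [FiniteDimensional ℝ n]
    (B : n →ₗ[ℝ] n →ₗ[ℝ] n)
    (hanti : ∀ X Y, B X Y = - B Y X)
    (h2step : ∀ X Y W, B (B X Y) W = 0)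
    (z : Submodule ℝ n) (hz : ∀ X, X ∈ z ↔ ∀ Y, B X Y = 0)
    (F : n →ₗ[ℝ] n) (hF : ∀ X Y, ⟪F X, Y⟫ = - ⟪X, F Y⟫) :
    (∀ U V W : n, ⟪F U, B V W⟫ + ⟪F V, B W U⟫ + ⟪F W, B U V⟫ = 0) ↔
    ((∀ Z ∈ z, ∀ C ∈ Submodule.span ℝ (Set.range fun p : n × n => B p.1 p.2),
        ⟪(z.orthogonalProjectionOnto (F Z) : n), C⟫ = 0) ∧
     (∀ U ∈ zᗮ, ∀ V ∈ zᗮ, ∀ W ∈ zᗮ,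
        ⟪(z.orthogonalProjectionOnto (F U) : n), B V W⟫ +
        ⟪(z.orthogonalProjectionOnto (F V) : n), B W U⟫ +
        ⟪(z.orthogonalProjectionOnto (F W) : n), B U V⟫ = 0)) := by
  have hcent : ∀ X Y, B X Y ∈ z := fun X Y => (hz _).2 fun W => h2step X Y W
  have hspan : Submodule.span ℝ (Set.range fun p : n × n => B p.1 p.2) ≤ z := by
    rw [Submodule.span_le]
    rintro _ ⟨⟨X, Y⟩, rfl⟩
    exact hcent X Y
  have hproj : ∀ (X C : n), C ∈ z →
      ⟪(z.orthogonalProjectionOnto X : n), C⟫ = ⟪X, C⟫ := by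
    intro X C hC
    have h : X - (z.orthogonalProjectionOnto X : n) ∈ zᗮ := Submodule.sub_starProjection_mem_orthogonal (K := z) X
    have h0 : ⟪X - (z.orthogonalProjectionOnto X : n), C⟫ = 0 := by
      rw [real_inner_comm]
      exact (Submodule.mem_orthogonal z _).1 h C hC
    rw [inner_sub_left] at h0
    linarith
  constructor
  · intro h
    constructor
    · intro Z hZ C hC
      rw [hproj (F Z) C (hspan hC)]
      induction hC using Submodule.span_induction with
      | mem x hx =>
        obtain ⟨⟨V, W⟩, rfl⟩ := hx
        have h1 := h Z V W
        have hZ0 : ∀ Y, B Z Y = 0 := (hz Z).1 hZ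
        have hWZ : B W Z = 0 := by rw [hanti]; simp [hZ0]
        simp only [hZ0, hWZ, inner_zero_right] at h1
        linarith
      | zero => simp
      | add x y hx hy ihx ihy => rw [inner_add_right, ihx, ihy]; ring
      | smul a x hx ih => rw [inner_smul_right, ih]; ring
    · intro U hU V hV W hW
      rw [hproj (F U) _ (hcent V W), hproj (F V) _ (hcent W U),
        hproj (F W) _ (hcent U V)]
      exact h U V W
  · rintro ⟨hC1, hC2⟩ U V W
    have hBz : ∀ X, X ∈ z → B X = 0 := fun X hX => LinearMap.ext ((hz X).1 hX)
    have hBq : ∀ X Y : n, B X Y =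
        B (X - (z.orthogonalProjectionOnto X : n)) (Y - (z.orthogonalProjectionOnto Y : n)) := by
      intro X Y
      have h1 : B ((z.orthogonalProjectionOnto X : n)) = 0 :=
        hBz _ (z.orthogonalProjectionOnto X).2
      have h2 : B X ((z.orthogonalProjectionOnto Y : n)) = 0 := by
        rw [hanti]
        rw [hBz _ (z.orthogonalProjectionOnto Y).2]
        simp
      simp only [map_sub, LinearMap.sub_apply, h1, h2, LinearMap.zero_apply, sub_zero]
    set pU := (z.orthogonalProjectionOnto U : n)
    set pV := (z.orthogonalProjectionOnto V : n)
    set pW := (z.orthogonalProjectionOnto W : n)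
    have hqU : U - pU ∈ zᗮ := Submodule.sub_starProjection_mem_orthogonal U
    have hqV : V - pV ∈ zᗮ := Submodule.sub_starProjection_mem_orthogonal V
    have hqW : W - pW ∈ zᗮ := Submodule.sub_starProjection_mem_orthogonal W
    -- replace F X by its z-projection in each inner product
    rw [← hproj (F U) _ (hcent V W), ← hproj (F V) _ (hcent W U),
      ← hproj (F W) _ (hcent U V)]
    -- split F X = F pX + F qX
    have hsplit : ∀ X Y C : n, C ∈ z →
        ⟪(z.orthogonalProjectionOnto (F X) : n), C⟫ =
        ⟪(z.orthogonalProjectionOnto (F ((z.orthogonalProjectionOnto X : n))) : n), C⟫ +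
        ⟪(z.orthogonalProjectionOnto (F (X - (z.orthogonalProjectionOnto X : n))) : n), C⟫ := by
      intro X Y C hC
      rw [hproj _ _ hC, hproj _ _ hC, hproj _ _ hC, ← inner_add_left, ← map_add]
      congr 2
      abel
    rw [hsplit U U _ (hcent V W), hsplit V V _ (hcent W U), hsplit W W _ (hcent U V)]
    have hz1 : ⟪(z.orthogonalProjectionOnto (F pU) : n), B (V - pV) (W - pW)⟫ = 0 :=
      hC1 pU (z.orthogonalProjectionOnto U).2 _ (Submodule.subset_span ⟨(V - pV, W - pW), rfl⟩)
    have hz2 : ⟪(z.orthogonalProjectionOnto (F pV) : n), B (W - pW) (U - pU)⟫ = 0 :=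
      hC1 pV (z.orthogonalProjectionOnto V).2 _ (Submodule.subset_span ⟨(W - pW, U - pU), rfl⟩)
    have hz3 : ⟪(z.orthogonalProjectionOnto (F pW) : n), B (U - pU) (V - pV)⟫ = 0 :=
      hC1 pW (z.orthogonalProjectionOnto W).2 _ (Submodule.subset_span ⟨(U - pU, V - pV), rfl⟩)
    have hc := hC2 _ hqU _ hqV _ hqW
    rw [hBq V W, hBq W U, hBq U V]
    linarith
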